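/- arXiv:2604.07202 — 6 statements merged into one kernel-verified Lean document; each statement's English description precedes it below -/
import Mathlib

section
/- Let n, m ≥ 1 and let A be a symmetric real (n+m)×(n+m) block matrix A = [[A₁₁, A₂₁ᵀ],[A₂₁, A₂₂]] with A₁₁ invertible, and set S_A := A₂₂ − A₂₁A₁₁⁻¹A₂₁ᵀ. Let M be a symmetric positive definite (n+m)×(n+m) matrix and M̄ a symmetric positive definite m×m matrix. Assume there exist constants c₁, c₂, c_l, c_u > 0 such that: (i) |xᵀAy| ≤ c₁‖x‖_M‖y‖_M for all x, y ∈ ℝ^{n+m}; (ii) for every x ∈ ℝ^{n+m} there exists y ≠ 0 with xᵀAy ≥ c₂‖x‖_M‖y‖_M; (iii) ‖(x₁, x̄)‖_M ≥ c_l‖x̄‖_{M̄} for every x₁ ∈ ℝⁿ and x̄ ∈ ℝᵐ; (iv) ‖(−A₁₁⁻¹A₂₁ᵀx̄, x̄)‖_M ≤ c_u‖x̄‖_{M̄} for every x̄ ∈ ℝᵐ. Then |x̄ᵀS_Aȳ| ≤ c₁c_u²‖x̄‖_{M̄}‖ȳ‖_{M̄} for all x̄, ȳ ∈ ℝᵐ,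 and for every x̄ ∈ ℝᵐ there exists ȳ ≠ 0 in ℝᵐ with x̄ᵀS_Aȳ ≥ c_l²c₂‖x̄‖_{M̄}‖ȳ‖_{M̄}. -/
open Matrix

/-- The norm on `k → ℝ` induced by a (positive definite) matrix `M`:
`‖x‖_M = (xᵀ M x)^{1/2}`. -/
noncomputable def mnorm {k : Type*} [Fintype k] (M : Matrix k k ℝ) (x : k → ℝ) : ℝ :=
  Real.sqrt (x ⬝ᵥ M.mulVec x)

lemma mnorm_nonneg {k : Type*} [Fintype k] (M : Matrix k k ℝ) (x : k → ℝ) :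
    0 ≤ mnorm M x := Real.sqrt_nonneg _

lemma mnorm_pos {k : Type*} [Fintype k] {M : Matrix k k ℝ} (hM : M.PosDef)
    {x : k → ℝ} (hx : x ≠ 0) : 0 < mnorm M x := by
  have := hM.dotProduct_mulVec_pos hx
  exact Real.sqrt_pos.mpr (by simpa using this)

/-- Generalized face-norm condition: parameter-robust preconditioning of the
statically condensed (Schur complement) system (matrix form of Theorem 2.1). -/
theorem schur_complement_uniform_bounded_and_infsup
    (n m : ℕ) (hn : 1 ≤ n) (hm : 1 ≤ m)
    (A₁₁ : Matrix (Fin n) (Fin n) ℝ) (A₂₁ : Matrix (Fin m) (Fin n) ℝ)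
    (A₂₂ : Matrix (Fin m) (Fin m) ℝ)
    (hAsymm : (Matrix.fromBlocks A₁₁ A₂₁ᵀ A₂₁ A₂₂).IsSymm)
    (hA₁₁ : IsUnit A₁₁.det)
    (M : Matrix (Fin n ⊕ Fin m) (Fin n ⊕ Fin m) ℝ) (hM : M.PosDef)
    (Mb : Matrix (Fin m) (Fin m) ℝ) (hMb : Mb.PosDef)
    (c₁ c₂ cl cu : ℝ) (hc₁ : 0 < c₁) (hc₂ : 0 < c₂) (hcl : 0 < cl) (hcu : 0 < cu)
    -- (i) uniform boundedness of the hybridizable system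
    (hbound : ∀ x y : Fin n ⊕ Fin m → ℝ,
      |x ⬝ᵥ (Matrix.fromBlocks A₁₁ A₂₁ᵀ A₂₁ A₂₂).mulVec y| ≤ c₁ * mnorm M x * mnorm M y)
    -- (ii) uniform inf-sup stability of the hybridizable system
    (hinfsup : ∀ x : Fin n ⊕ Fin m → ℝ, ∃ y : Fin n ⊕ Fin m → ℝ, y ≠ 0 ∧
      c₂ * mnorm M x * mnorm M y ≤ x ⬝ᵥ (Matrix.fromBlocks A₁₁ A₂₁ᵀ A₂₁ A₂₂).mulVec y)
    -- (iii) lower face-norm condition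
    (hlow : ∀ (x₁ : Fin n → ℝ) (xb : Fin m → ℝ),
      cl * mnorm Mb xb ≤ mnorm M (Sum.elim x₁ xb))
    -- (iv) upper face-norm condition
    (hup : ∀ xb : Fin m → ℝ,
      mnorm M (Sum.elim (-(A₁₁⁻¹.mulVec (A₂₁ᵀ.mulVec xb))) xb) ≤ cu * mnorm Mb xb) :
    (∀ xb yb : Fin m → ℝ,
      |xb ⬝ᵥ (A₂₂ - A₂₁ * A₁₁⁻¹ * A₂₁ᵀ).mulVec yb| ≤ c₁ * cu ^ 2 * mnorm Mb xb * mnorm Mb yb) ∧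
    (∀ xb : Fin m → ℝ, ∃ yb : Fin m → ℝ, yb ≠ 0 ∧
      cl ^ 2 * c₂ * mnorm Mb xb * mnorm Mb yb ≤
        xb ⬝ᵥ (A₂₂ - A₂₁ * A₁₁⁻¹ * A₂₁ᵀ).mulVec yb) := by
  set A := Matrix.fromBlocks A₁₁ A₂₁ᵀ A₂₁ A₂₂ with hA
  set S := A₂₂ - A₂₁ * A₁₁⁻¹ * A₂₁ᵀ with hS
  set E : (Fin m → ℝ) → (Fin n ⊕ Fin m → ℝ) :=
    fun b => Sum.elim (-(A₁₁⁻¹.mulVec (A₂₁ᵀ.mulVec b))) b with hE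
  have hAT : Aᵀ = A := hAsymm
  have h11 : A₁₁ᵀ = A₁₁ := by
    have := congrArg Matrix.toBlocks₁₁ hAT
    simpa [hA, fromBlocks_transpose, toBlocks_fromBlocks₁₁] using this
  have h22 : A₂₂ᵀ = A₂₂ := by
    have := congrArg Matrix.toBlocks₂₂ hAT
    simpa [hA, fromBlocks_transpose, toBlocks_fromBlocks₂₂] using this
  have hSsymm : Sᵀ = S := by
    rw [hS, transpose_sub, transpose_mul, transpose_mul, transpose_nonsing_inv,
      transpose_transpose, h11, h22, Matrix.mul_assoc]
  have key : ∀ b : Fin m → ℝ, A.mulVec (E b) = Sum.elim (0 : Fin n → ℝ) (S.mulVec b) := by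
    intro b
    have hb1 : A₁₁ *ᵥ -(A₁₁⁻¹ *ᵥ A₂₁ᵀ *ᵥ b) + A₂₁ᵀ *ᵥ b = (0 : Fin n → ℝ) := by
      rw [Matrix.mulVec_neg, Matrix.mulVec_mulVec, Matrix.mul_nonsing_inv _ hA₁₁,
        Matrix.one_mulVec]
      simp
    have hb2 : A₂₁ *ᵥ -(A₁₁⁻¹ *ᵥ A₂₁ᵀ *ᵥ b) + A₂₂ *ᵥ b = S *ᵥ b := by
      rw [Matrix.mulVec_neg, Matrix.mulVec_mulVec, Matrix.mulVec_mulVec, hS,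
        Matrix.sub_mulVec, Matrix.mul_assoc]
      abel
    show A.mulVec (Sum.elim (-(A₁₁⁻¹.mulVec (A₂₁ᵀ.mulVec b))) b) = _
    rw [hA, fromBlocks_mulVec, Sum.elim_comp_inl, Sum.elim_comp_inr, hb1, hb2]
  have keydot : ∀ a b : Fin m → ℝ, E a ⬝ᵥ A.mulVec (E b) = a ⬝ᵥ S.mulVec b := by
    intro a b
    rw [key b]
    show Sum.elim (-(A₁₁⁻¹.mulVec (A₂₁ᵀ.mulVec a))) a ⬝ᵥ Sum.elim (0 : Fin n → ℝ) (S.mulVec b) = _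
    rw [sumElim_dotProduct_sumElim, dotProduct_zero, zero_add]
  constructor
  · intro xb yb
    have h := hbound (E xb) (E yb)
    rw [keydot] at h
    have h1 : mnorm M (E xb) ≤ cu * mnorm Mb xb := hup xb
    have h2 : mnorm M (E yb) ≤ cu * mnorm Mb yb := hup yb
    have n2 := mnorm_nonneg M (E yb)
    have n3 := mnorm_nonneg Mb xb
    have hab : mnorm M (E xb) * mnorm M (E yb) ≤ (cu * mnorm Mb xb) * (cu * mnorm Mb yb) :=
      mul_le_mul h1 h2 n2 (by positivity)
    have hfin := mul_le_mul_of_nonneg_left hab hc₁.le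
    calc |xb ⬝ᵥ S.mulVec yb| ≤ c₁ * mnorm M (E xb) * mnorm M (E yb) := h
      _ ≤ c₁ * cu ^ 2 * mnorm Mb xb * mnorm Mb yb := by nlinarith [hfin]
  · intro xb
    by_cases hx : xb = 0
    · refine ⟨Pi.single ⟨0, hm⟩ 1, ?_, ?_⟩
      · intro h
        have := congrFun h ⟨0, hm⟩
        simp at this
      · subst hx
        simp [mnorm]
    · obtain ⟨y, hy0, hy⟩ := hinfsup (E xb)
      set yb : Fin m → ℝ := y ∘ Sum.inr with hyb
      have hydecomp : y = Sum.elim (y ∘ Sum.inl) yb := by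
        funext i; cases i <;> rfl
      have hsx : S.mulVec xb ⬝ᵥ yb = xb ⬝ᵥ S.mulVec yb := by
        rw [Matrix.dotProduct_mulVec xb S yb, ← Matrix.mulVec_transpose, hSsymm]
      have hval : E xb ⬝ᵥ A.mulVec y = xb ⬝ᵥ S.mulVec yb := by
        rw [Matrix.dotProduct_mulVec, ← Matrix.mulVec_transpose, hAT, key xb, hydecomp,
          sumElim_dotProduct_sumElim, zero_dotProduct, zero_add, hsx]
      rw [hval] at hy
      have hExb : E xb ≠ 0 := by
        intro h
        apply hx
        funext i
        have := congrFun h (Sum.inr i)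
        simpa [hE] using this
      have hpos : 0 < c₂ * mnorm M (E xb) * mnorm M y :=
        mul_pos (mul_pos hc₂ (mnorm_pos hM hExb)) (mnorm_pos hM hy0)
      have hybne : yb ≠ 0 := by
        intro h
        have hz : xb ⬝ᵥ S.mulVec yb = 0 := by rw [h]; simp
        rw [hz] at hy
        linarith
      refine ⟨yb, hybne, ?_⟩
      have h1 : cl * mnorm Mb xb ≤ mnorm M (E xb) := hlow _ xb
      have h2 : cl * mnorm Mb yb ≤ mnorm M y := by
        rw [hydecomp]; exact hlow _ yb
      have n3 := mnorm_nonneg Mb xb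
      have n4 := mnorm_nonneg Mb yb
      have hab : (cl * mnorm Mb xb) * (cl * mnorm Mb yb) ≤ mnorm M (E xb) * mnorm M y :=
        mul_le_mul h1 h2 (by positivity) (mnorm_nonneg M (E xb))
      have hfin := mul_le_mul_of_nonneg_left hab hc₂.le
      nlinarith [hfin, hy]
end

section
/- Let n, m ≥ 1 and let A be a symmetric real (n+m)×(n+m) block matrix A = [[A₁₁, A₂₁ᵀ],[A₂₁, A₂₂]] with A₁₁ invertible, and set S_A := A₂₂ − A₂₁A₁₁⁻¹A₂₁ᵀ. Let P be a symmetric positive definite (n+m)×(n+m) block matrix P = [[P₁₁, P₂₁ᵀ],[P₂₁, P₂₂]] (so P₁₁ is positive definite) and let S_P := P₂₂ − P₂₁P₁₁⁻¹P₂₁ᵀ be its Schur complement, which is symmetric positive definite. Assume there exist constants c₁, c₂, c_l > 0 such that: (i) |xᵀAy| ≤ c₁‖x‖_P‖y‖_P for all x, y ∈ ℝ^{n+m}; (ii) for every x ∈ ℝ^{n+m} there exists y ≠ 0 with xᵀAy ≥ c₂‖x‖_P‖y‖_P; (iii) ‖(−A₁₁⁻¹A₂₁ᵀx̄, x̄)‖_P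 ≤ c_l‖x̄‖_{S_P} for every x̄ ∈ ℝᵐ. Then |x̄ᵀS_Aȳ| ≤ c₁c_l²‖x̄‖_{S_P}‖ȳ‖_{S_P} for all x̄, ȳ ∈ ℝᵐ, and for every x̄ ∈ ℝᵐ there exists ȳ ≠ 0 with x̄ᵀS_Aȳ ≥ c₂‖x̄‖_{S_P}‖ȳ‖_{S_P}. -/
open Matrix

lemma key1 {n m : ℕ}
    (A₁₁ : Matrix (Fin n) (Fin n) ℝ) (A₂₁ : Matrix (Fin m) (Fin n) ℝ)
    (A₂₂ : Matrix (Fin m) (Fin m) ℝ) (hA₁₁ : IsUnit A₁₁.det) (yb : Fin m → ℝ) :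
    (Matrix.fromBlocks A₁₁ A₂₁ᵀ A₂₁ A₂₂).mulVec
        (Sum.elim (-(A₁₁⁻¹.mulVec (A₂₁ᵀ.mulVec yb))) yb) =
      Sum.elim (0 : Fin n → ℝ) ((A₂₂ - A₂₁ * A₁₁⁻¹ * A₂₁ᵀ).mulVec yb) := by
  rw [fromBlocks_mulVec]
  simp only [Sum.elim_comp_inl, Sum.elim_comp_inr, mulVec_neg, mulVec_mulVec,
    ← Matrix.mul_assoc, Matrix.mul_nonsing_inv _ hA₁₁, Matrix.one_mul, sub_mulVec]
  ext (i | i) <;> simp <;> ring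

lemma sa_symm {n m : ℕ}
    (A₁₁ : Matrix (Fin n) (Fin n) ℝ) (A₂₁ : Matrix (Fin m) (Fin n) ℝ)
    (A₂₂ : Matrix (Fin m) (Fin m) ℝ)
    (hAsymm : (Matrix.fromBlocks A₁₁ A₂₁ᵀ A₂₁ A₂₂).IsSymm) :
    (A₂₂ - A₂₁ * A₁₁⁻¹ * A₂₁ᵀ)ᵀ = A₂₂ - A₂₁ * A₁₁⁻¹ * A₂₁ᵀ := by
  have h := hAsymm
  rw [Matrix.IsSymm, fromBlocks_transpose] at h
  have h11 : A₁₁ᵀ = A₁₁ := by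
    have := congrArg Matrix.toBlocks₁₁ h
    simpa [toBlocks_fromBlocks₁₁] using this
  have h22 : A₂₂ᵀ = A₂₂ := by
    have := congrArg Matrix.toBlocks₂₂ h
    simpa [toBlocks_fromBlocks₂₂] using this
  rw [transpose_sub, transpose_mul, transpose_mul, transpose_transpose,
    transpose_nonsing_inv, h11, h22, Matrix.mul_assoc]

lemma key2 {n m : ℕ}
    (A₁₁ : Matrix (Fin n) (Fin n) ℝ) (A₂₁ : Matrix (Fin m) (Fin n) ℝ)
    (A₂₂ : Matrix (Fin m) (Fin m) ℝ)
    (hAsymm : (Matrix.fromBlocks A₁₁ A₂₁ᵀ A₂₁ A₂₂).IsSymm)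
    (hA₁₁ : IsUnit A₁₁.det) (xb : Fin m → ℝ) (y : Fin n ⊕ Fin m → ℝ) :
    (Sum.elim (-(A₁₁⁻¹.mulVec (A₂₁ᵀ.mulVec xb))) xb) ⬝ᵥ
        (Matrix.fromBlocks A₁₁ A₂₁ᵀ A₂₁ A₂₂).mulVec y =
      xb ⬝ᵥ (A₂₂ - A₂₁ * A₁₁⁻¹ * A₂₁ᵀ).mulVec (y ∘ Sum.inr) := by
  rw [dotProduct_mulVec, ← Matrix.IsSymm.eq hAsymm, vecMul_transpose,
    key1 A₁₁ A₂₁ A₂₂ hA₁₁ xb, ← Sum.elim_comp_inl_inr y,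
    sumElim_dotProduct_sumElim, zero_dotProduct, zero_add, dotProduct_comm,
    dotProduct_mulVec, ← mulVec_transpose, sa_symm A₁₁ A₂₁ A₂₂ hAsymm]
  exact dotProduct_comm _ _

lemma p11_posdef {n m : ℕ}
    (P₁₁ : Matrix (Fin n) (Fin n) ℝ) (P₂₁ : Matrix (Fin m) (Fin n) ℝ)
    (P₂₂ : Matrix (Fin m) (Fin m) ℝ)
    (hP : (Matrix.fromBlocks P₁₁ P₂₁ᵀ P₂₁ P₂₂).PosDef) : P₁₁.PosDef := by
  refine .of_dotProduct_mulVec_pos ?_ ?_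
  · have := hP.1
    rw [isHermitian_fromBlocks_iff] at this
    exact this.1
  · intro x hx
    have hx' : (Sum.elim x (0 : Fin m → ℝ)) ≠ 0 := by
      intro h
      apply hx
      ext i
      exact congrFun h (Sum.inl i)
    have := hP.dotProduct_mulVec_pos hx'
    simpa [fromBlocks_mulVec, sumElim_dotProduct_sumElim] using this

lemma key3 {n m : ℕ}
    (P₁₁ : Matrix (Fin n) (Fin n) ℝ) (P₂₁ : Matrix (Fin m) (Fin n) ℝ)
    (P₂₂ : Matrix (Fin m) (Fin m) ℝ)
    (hP : (Matrix.fromBlocks P₁₁ P₂₁ᵀ P₂₁ P₂₂).PosDef)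
    (x₁ : Fin n → ℝ) (xb : Fin m → ℝ) :
    mnorm (P₂₂ - P₂₁ * P₁₁⁻¹ * P₂₁ᵀ) xb ≤
      mnorm (Matrix.fromBlocks P₁₁ P₂₁ᵀ P₂₁ P₂₂) (Sum.elim x₁ xb) := by
  have hP11 : P₁₁.PosDef := p11_posdef P₁₁ P₂₁ P₂₂ hP
  haveI : Invertible P₁₁ :=
    Matrix.invertibleOfIsUnitDet P₁₁ (isUnit_iff_ne_zero.mpr hP11.det_pos.ne')
  have h := Matrix.schur_complement_eq₁₁ (A := P₁₁) P₂₁ᵀ P₂₂ x₁ xb hP11.1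
  rw [conjTranspose_eq_transpose_of_trivial, transpose_transpose] at h
  simp only [star_trivial] at h
  apply Real.sqrt_le_sqrt
  rw [dotProduct_mulVec, dotProduct_mulVec, h]
  apply le_add_of_nonneg_left
  rw [← dotProduct_mulVec]
  have := hP11.posSemidef.dotProduct_mulVec_nonneg (x₁ + (P₁₁⁻¹ * P₂₁ᵀ) *ᵥ xb)
  simpa using this

/-- Special case of the generalized face-norm condition theorem where the face inner
product is the Schur complement `S_P` of the full preconditioner `P` (Remark 2.2). -/
theorem schur_complement_uniform_bounded_and_infsup_of_schur_precond
    (n m : ℕ) (hn : 1 ≤ n) (hm : 1 ≤ m)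
    (A₁₁ : Matrix (Fin n) (Fin n) ℝ) (A₂₁ : Matrix (Fin m) (Fin n) ℝ)
    (A₂₂ : Matrix (Fin m) (Fin m) ℝ)
    (hAsymm : (Matrix.fromBlocks A₁₁ A₂₁ᵀ A₂₁ A₂₂).IsSymm)
    (hA₁₁ : IsUnit A₁₁.det)
    (P₁₁ : Matrix (Fin n) (Fin n) ℝ) (P₂₁ : Matrix (Fin m) (Fin n) ℝ)
    (P₂₂ : Matrix (Fin m) (Fin m) ℝ)
    (hP : (Matrix.fromBlocks P₁₁ P₂₁ᵀ P₂₁ P₂₂).PosDef)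
    (c₁ c₂ cl : ℝ) (hc₁ : 0 < c₁) (hc₂ : 0 < c₂) (hcl : 0 < cl)
    -- (i) uniform boundedness of the hybridizable system in the P-norm
    (hbound : ∀ x y : Fin n ⊕ Fin m → ℝ,
      |x ⬝ᵥ (Matrix.fromBlocks A₁₁ A₂₁ᵀ A₂₁ A₂₂).mulVec y| ≤
        c₁ * mnorm (Matrix.fromBlocks P₁₁ P₂₁ᵀ P₂₁ P₂₂) x *
          mnorm (Matrix.fromBlocks P₁₁ P₂₁ᵀ P₂₁ P₂₂) y)
    -- (ii) uniform inf-sup stability of the hybridizable system in the P-norm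
    (hinfsup : ∀ x : Fin n ⊕ Fin m → ℝ, ∃ y : Fin n ⊕ Fin m → ℝ, y ≠ 0 ∧
      c₂ * mnorm (Matrix.fromBlocks P₁₁ P₂₁ᵀ P₂₁ P₂₂) x *
          mnorm (Matrix.fromBlocks P₁₁ P₂₁ᵀ P₂₁ P₂₂) y ≤
        x ⬝ᵥ (Matrix.fromBlocks A₁₁ A₂₁ᵀ A₂₁ A₂₂).mulVec y)
    -- (iii) face-norm condition with respect to the Schur complement of P
    (hup : ∀ xb : Fin m → ℝ,
      mnorm (Matrix.fromBlocks P₁₁ P₂₁ᵀ P₂₁ P₂₂)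
          (Sum.elim (-(A₁₁⁻¹.mulVec (A₂₁ᵀ.mulVec xb))) xb) ≤
        cl * mnorm (P₂₂ - P₂₁ * P₁₁⁻¹ * P₂₁ᵀ) xb) :
    (∀ xb yb : Fin m → ℝ,
      |xb ⬝ᵥ (A₂₂ - A₂₁ * A₁₁⁻¹ * A₂₁ᵀ).mulVec yb| ≤
        c₁ * cl ^ 2 * mnorm (P₂₂ - P₂₁ * P₁₁⁻¹ * P₂₁ᵀ) xb *
          mnorm (P₂₂ - P₂₁ * P₁₁⁻¹ * P₂₁ᵀ) yb) ∧
    (∀ xb : Fin m → ℝ, ∃ yb : Fin m → ℝ, yb ≠ 0 ∧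
      c₂ * mnorm (P₂₂ - P₂₁ * P₁₁⁻¹ * P₂₁ᵀ) xb * mnorm (P₂₂ - P₂₁ * P₁₁⁻¹ * P₂₁ᵀ) yb ≤
        xb ⬝ᵥ (A₂₂ - A₂₁ * A₁₁⁻¹ * A₂₁ᵀ).mulVec yb) := by
  set E : (Fin m → ℝ) → (Fin n ⊕ Fin m → ℝ) :=
    fun xb => Sum.elim (-(A₁₁⁻¹.mulVec (A₂₁ᵀ.mulVec xb))) xb with hE
  constructor
  · intro xb yb
    have hkey : xb ⬝ᵥ (A₂₂ - A₂₁ * A₁₁⁻¹ * A₂₁ᵀ).mulVec yb =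
        (E xb) ⬝ᵥ (Matrix.fromBlocks A₁₁ A₂₁ᵀ A₂₁ A₂₂).mulVec (E yb) := by
      rw [hE]
      rw [key1 A₁₁ A₂₁ A₂₂ hA₁₁ yb, sumElim_dotProduct_sumElim, dotProduct_zero,
        zero_add]
    rw [hkey]
    calc |(E xb) ⬝ᵥ (Matrix.fromBlocks A₁₁ A₂₁ᵀ A₂₁ A₂₂).mulVec (E yb)| ≤
        c₁ * mnorm (Matrix.fromBlocks P₁₁ P₂₁ᵀ P₂₁ P₂₂) (E xb) *
          mnorm (Matrix.fromBlocks P₁₁ P₂₁ᵀ P₂₁ P₂₂) (E yb) := hbound _ _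
      _ ≤ c₁ * (cl * mnorm (P₂₂ - P₂₁ * P₁₁⁻¹ * P₂₁ᵀ) xb) *
          (cl * mnorm (P₂₂ - P₂₁ * P₁₁⁻¹ * P₂₁ᵀ) yb) := by
          apply mul_le_mul
          · exact mul_le_mul_of_nonneg_left (hup xb) hc₁.le
          · exact hup yb
          · exact mnorm_nonneg _ _
          · exact mul_nonneg hc₁.le (mul_nonneg hcl.le (mnorm_nonneg _ _))
      _ = c₁ * cl ^ 2 * mnorm (P₂₂ - P₂₁ * P₁₁⁻¹ * P₂₁ᵀ) xb *
          mnorm (P₂₂ - P₂₁ * P₁₁⁻¹ * P₂₁ᵀ) yb := by ring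
  · intro xb
    by_cases hxb : xb = 0
    · refine ⟨fun _ => 1, ?_, ?_⟩
      · intro h
        have := congrFun h ⟨0, hm⟩
        norm_num at this
      · subst hxb
        simp [mnorm]
    · obtain ⟨y, hy0, hy⟩ := hinfsup (E xb)
      rw [key2 A₁₁ A₂₁ A₂₂ hAsymm hA₁₁ xb y] at hy
      have hExb : E xb ≠ 0 := by
        intro h
        apply hxb
        ext i
        exact congrFun h (Sum.inr i)
      have h1 : 0 < mnorm (Matrix.fromBlocks P₁₁ P₂₁ᵀ P₂₁ P₂₂) (E xb) := mnorm_pos hP hExb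
      have h2 : 0 < mnorm (Matrix.fromBlocks P₁₁ P₂₁ᵀ P₂₁ P₂₂) y := mnorm_pos hP hy0
      refine ⟨y ∘ Sum.inr, ?_, ?_⟩
      · intro h
        rw [h] at hy
        simp only [mulVec_zero, dotProduct_zero] at hy
        have : 0 < c₂ * mnorm (Matrix.fromBlocks P₁₁ P₂₁ᵀ P₂₁ P₂₂) (E xb) *
            mnorm (Matrix.fromBlocks P₁₁ P₂₁ᵀ P₂₁ P₂₂) y := by positivity
        linarith
      · have hx3 : mnorm (P₂₂ - P₂₁ * P₁₁⁻¹ * P₂₁ᵀ) xb ≤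
            mnorm (Matrix.fromBlocks P₁₁ P₂₁ᵀ P₂₁ P₂₂) (E xb) :=
          key3 P₁₁ P₂₁ P₂₂ hP _ xb
        have hy3 : mnorm (P₂₂ - P₂₁ * P₁₁⁻¹ * P₂₁ᵀ) (y ∘ Sum.inr) ≤
            mnorm (Matrix.fromBlocks P₁₁ P₂₁ᵀ P₂₁ P₂₂) y := by
          have := key3 P₁₁ P₂₁ P₂₂ hP (y ∘ Sum.inl) (y ∘ Sum.inr)
          rwa [Sum.elim_comp_inl_inr y] at this
        refine le_trans ?_ hy
        apply mul_le_mul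
        · exact mul_le_mul_of_nonneg_left hx3 hc₂.le
        · exact hy3
        · exact mnorm_nonneg _ _
        · exact mul_nonneg hc₂.le h1.le
end

section
/- Let ν, τ > 0. Let Pˢ = [[Pˢ₁₁, 0],[0, Pˢ₂₂]] be a symmetric real (n+m)×(n+m) block-diagonal matrix with Pˢ₁₁ positive semidefinite and Pˢ₂₂ symmetric, and let Pᵈ = [[Pᵈ₁₁, (Pᵈ₂₁)ᵀ],[Pᵈ₂₁, Pᵈ₂₂]] be a symmetric real (n+m)×(n+m) block matrix with Pᵈ₁₁ positive definite; set S_{Pᵈ} := Pᵈ₂₂ − Pᵈ₂₁(Pᵈ₁₁)⁻¹(Pᵈ₂₁)ᵀ. Then for every q ∈ ℝ^{n+m} with second block q̄ ∈ ℝᵐ, the infimum over all splittings q = q' + q'' in ℝ^{n+m} of ν⁻¹(q')ᵀPˢq' + τ⁻¹(q'')ᵀPᵈq'' is at least the infimum over all splittings q̄ = q̄₁ + q̄₂ in ℝᵐ of ν⁻¹q̄₁ᵀPˢ₂₂q̄₁ + τ⁻¹q̄₂ᵀS_{Pᵈ}q̄₂. -/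
open Matrix

/-- The weighted intersection-sum infimum built from two block operators on the full
space dominates the one built from their Schur complements on the face space
(inequality (5.11) of the paper, stated with infima in the extended reals). -/
theorem sum_norm_inf_ge_schur_sum_norm_inf
    (n m : ℕ) (ν τ : ℝ) (hν : 0 < ν) (hτ : 0 < τ)
    (Ps₁₁ : Matrix (Fin n) (Fin n) ℝ) (Ps₂₂ : Matrix (Fin m) (Fin m) ℝ)
    (hPs₁₁ : Ps₁₁.PosSemidef) (hPs₂₂ : Ps₂₂.IsSymm)
    (Pd₁₁ : Matrix (Fin n) (Fin n) ℝ) (Pd₂₁ : Matrix (Fin m) (Fin n) ℝ)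
    (Pd₂₂ : Matrix (Fin m) (Fin m) ℝ)
    (hPdsymm : (Matrix.fromBlocks Pd₁₁ Pd₂₁ᵀ Pd₂₁ Pd₂₂).IsSymm)
    (hPd₁₁ : Pd₁₁.PosDef)
    (q : Fin n ⊕ Fin m → ℝ) :
    (⨅ p : {p : (Fin n ⊕ Fin m → ℝ) × (Fin n ⊕ Fin m → ℝ) // p.1 + p.2 = q},
        ((ν⁻¹ * (p.1.1 ⬝ᵥ (Matrix.fromBlocks Ps₁₁ 0 0 Ps₂₂).mulVec p.1.1) +
          τ⁻¹ * (p.1.2 ⬝ᵥ (Matrix.fromBlocks Pd₁₁ Pd₂₁ᵀ Pd₂₁ Pd₂₂).mulVec p.1.2) : ℝ) :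
          EReal)) ≥
      ⨅ p : {p : (Fin m → ℝ) × (Fin m → ℝ) // p.1 + p.2 = fun i => q (Sum.inr i)},
        ((ν⁻¹ * (p.1.1 ⬝ᵥ Ps₂₂.mulVec p.1.1) +
          τ⁻¹ * (p.1.2 ⬝ᵥ (Pd₂₂ - Pd₂₁ * Pd₁₁⁻¹ * Pd₂₁ᵀ).mulVec p.1.2) : ℝ) : EReal) := by
  haveI : Invertible Pd₁₁ := hPd₁₁.isUnit.invertible
  refine le_iInf fun ⟨p, hp⟩ => ?_
  refine iInf_le_of_le ⟨(fun i => p.1 (Sum.inr i), fun i => p.2 (Sum.inr i)), ?_⟩ ?_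
  · funext i
    simpa using congrFun hp (Sum.inr i)
  · rw [EReal.coe_le_coe_iff]
    have key1 : p.1 ⬝ᵥ (Matrix.fromBlocks Ps₁₁ 0 0 Ps₂₂).mulVec p.1 =
        (p.1 ∘ Sum.inl) ⬝ᵥ Ps₁₁.mulVec (p.1 ∘ Sum.inl) +
        (p.1 ∘ Sum.inr) ⬝ᵥ Ps₂₂.mulVec (p.1 ∘ Sum.inr) := by
      conv_lhs => rw [← Sum.elim_comp_inl_inr p.1, Matrix.fromBlocks_mulVec,
        sumElim_dotProduct_sumElim]
      simp
    have key2 : p.2 ⬝ᵥ (Matrix.fromBlocks Pd₁₁ Pd₂₁ᵀ Pd₂₁ Pd₂₂).mulVec p.2 =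
        (p.2 ∘ Sum.inl + (Pd₁₁⁻¹ * Pd₂₁ᵀ).mulVec (p.2 ∘ Sum.inr)) ⬝ᵥ
          Pd₁₁.mulVec (p.2 ∘ Sum.inl + (Pd₁₁⁻¹ * Pd₂₁ᵀ).mulVec (p.2 ∘ Sum.inr)) +
        (p.2 ∘ Sum.inr) ⬝ᵥ (Pd₂₂ - Pd₂₁ * Pd₁₁⁻¹ * Pd₂₁ᵀ).mulVec (p.2 ∘ Sum.inr) := by
      have hB : (Pd₂₁ᵀ)ᴴ = Pd₂₁ := by
        rw [Matrix.conjTranspose_eq_transpose_of_trivial, Matrix.transpose_transpose]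
      have hsc := Matrix.schur_complement_eq₁₁ Pd₂₁ᵀ Pd₂₂ (p.2 ∘ Sum.inl) (p.2 ∘ Sum.inr)
        hPd₁₁.isHermitian
      rw [hB] at hsc
      simp only [star_trivial, ← Matrix.dotProduct_mulVec] at hsc
      conv_lhs => rw [← Sum.elim_comp_inl_inr p.2]
      exact hsc
    have h1 : (fun i => p.1 (Sum.inr i)) ⬝ᵥ Ps₂₂.mulVec (fun i => p.1 (Sum.inr i)) ≤
        p.1 ⬝ᵥ (Matrix.fromBlocks Ps₁₁ 0 0 Ps₂₂).mulVec p.1 := by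
      rw [key1]
      have := hPs₁₁.dotProduct_mulVec_nonneg (p.1 ∘ Sum.inl)
      simp only [star_trivial] at this
      have heq : (fun i => p.1 (Sum.inr i)) = p.1 ∘ Sum.inr := rfl
      rw [heq]
      linarith
    have h2 : (fun i => p.2 (Sum.inr i)) ⬝ᵥ
        (Pd₂₂ - Pd₂₁ * Pd₁₁⁻¹ * Pd₂₁ᵀ).mulVec (fun i => p.2 (Sum.inr i)) ≤
        p.2 ⬝ᵥ (Matrix.fromBlocks Pd₁₁ Pd₂₁ᵀ Pd₂₁ Pd₂₂).mulVec p.2 := by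
      rw [key2]
      have := hPd₁₁.posSemidef.dotProduct_mulVec_nonneg
        (p.2 ∘ Sum.inl + (Pd₁₁⁻¹ * Pd₂₁ᵀ).mulVec (p.2 ∘ Sum.inr))
      simp only [star_trivial] at this
      have heq : (fun i => p.2 (Sum.inr i)) = p.2 ∘ Sum.inr := rfl
      rw [heq]
      linarith
    have hν' : (0:ℝ) ≤ ν⁻¹ := le_of_lt (by positivity)
    have hτ' : (0:ℝ) ≤ τ⁻¹ := le_of_lt (by positivity)
    exact add_le_add (mul_le_mul_of_nonneg_left h1 hν') (mul_le_mul_of_nonneg_left h2 hτ')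
end

section
/- Let A = [[A₁₁, A₂₁ᵀ],[A₂₁, A₂₂]] and P = [[P₁₁, P₂₁ᵀ],[P₂₁, P₂₂]] be symmetric real (n+m)×(n+m) block matrices with A₁₁ and P₁₁ positive definite, and let S_A := A₂₂ − A₂₁A₁₁⁻¹A₂₁ᵀ and S_P := P₂₂ − P₂₁P₁₁⁻¹P₂₁ᵀ. If there exist constants c₁, c₂ > 0 such that c₁ xᵀPx ≤ xᵀAx ≤ c₂ xᵀPx for all x ∈ ℝ^{n+m}, then c₁ x̄ᵀS_Px̄ ≤ x̄ᵀS_Ax̄ ≤ c₂ x̄ᵀS_Px̄ for all x̄ ∈ ℝᵐ. -/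
open Matrix

lemma schur_quad_eq {k l : ℕ}
    (A₁₁ : Matrix (Fin k) (Fin k) ℝ) (A₂₁ : Matrix (Fin l) (Fin k) ℝ)
    (A₂₂ : Matrix (Fin l) (Fin l) ℝ) (h : A₁₁.PosDef) (y : Fin l → ℝ) (x : Fin k → ℝ) :
    (Sum.elim x y) ⬝ᵥ (fromBlocks A₁₁ A₂₁ᵀ A₂₁ A₂₂) *ᵥ (Sum.elim x y) =
      (x + (A₁₁⁻¹ * A₂₁ᵀ) *ᵥ y) ⬝ᵥ A₁₁ *ᵥ (x + (A₁₁⁻¹ * A₂₁ᵀ) *ᵥ y) +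
        y ⬝ᵥ (A₂₂ - A₂₁ * A₁₁⁻¹ * A₂₁ᵀ) *ᵥ y := by
  haveI := h.isUnit.invertible
  have hB : A₂₁ = (A₂₁ᵀ)ᴴ := by ext i j; simp [conjTranspose]
  have := schur_complement_eq₁₁ (α := ℝ) (A := A₁₁) A₂₁ᵀ A₂₂ x y h.isHermitian
  simpa [dotProduct_mulVec, ← hB] using this

lemma schur_quad_min {k l : ℕ}
    (A₁₁ : Matrix (Fin k) (Fin k) ℝ) (A₂₁ : Matrix (Fin l) (Fin k) ℝ)
    (A₂₂ : Matrix (Fin l) (Fin l) ℝ) (h : A₁₁.PosDef) (y : Fin l → ℝ) (x : Fin k → ℝ) :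
    y ⬝ᵥ (A₂₂ - A₂₁ * A₁₁⁻¹ * A₂₁ᵀ) *ᵥ y ≤
      (Sum.elim x y) ⬝ᵥ (fromBlocks A₁₁ A₂₁ᵀ A₂₁ A₂₂) *ᵥ (Sum.elim x y) := by
  rw [schur_quad_eq A₁₁ A₂₁ A₂₂ h y x]
  have h0 : 0 ≤ (x + (A₁₁⁻¹ * A₂₁ᵀ) *ᵥ y) ⬝ᵥ A₁₁ *ᵥ (x + (A₁₁⁻¹ * A₂₁ᵀ) *ᵥ y) := by
    simpa using h.posSemidef.dotProduct_mulVec_nonneg (x + (A₁₁⁻¹ * A₂₁ᵀ) *ᵥ y)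
  linarith

lemma schur_quad_attained {k l : ℕ}
    (A₁₁ : Matrix (Fin k) (Fin k) ℝ) (A₂₁ : Matrix (Fin l) (Fin k) ℝ)
    (A₂₂ : Matrix (Fin l) (Fin l) ℝ) (h : A₁₁.PosDef) (y : Fin l → ℝ) :
    (Sum.elim (-((A₁₁⁻¹ * A₂₁ᵀ) *ᵥ y)) y) ⬝ᵥ
        (fromBlocks A₁₁ A₂₁ᵀ A₂₁ A₂₂) *ᵥ (Sum.elim (-((A₁₁⁻¹ * A₂₁ᵀ) *ᵥ y)) y) =
      y ⬝ᵥ (A₂₂ - A₂₁ * A₁₁⁻¹ * A₂₁ᵀ) *ᵥ y := by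
  rw [schur_quad_eq A₁₁ A₂₁ A₂₂ h y _]
  simp

/-- Spectral equivalence of two symmetric positive block operators transfers, with the
same constants, to spectral equivalence of their Schur complements (Theorem B.2). -/
theorem schur_complement_spectral_equivalence
    (n m : ℕ)
    (A₁₁ : Matrix (Fin n) (Fin n) ℝ) (A₂₁ : Matrix (Fin m) (Fin n) ℝ)
    (A₂₂ : Matrix (Fin m) (Fin m) ℝ)
    (P₁₁ : Matrix (Fin n) (Fin n) ℝ) (P₂₁ : Matrix (Fin m) (Fin n) ℝ)
    (P₂₂ : Matrix (Fin m) (Fin m) ℝ)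
    (hAsymm : (Matrix.fromBlocks A₁₁ A₂₁ᵀ A₂₁ A₂₂).IsSymm)
    (hPsymm : (Matrix.fromBlocks P₁₁ P₂₁ᵀ P₂₁ P₂₂).IsSymm)
    (hA₁₁ : A₁₁.PosDef) (hP₁₁ : P₁₁.PosDef)
    (c₁ c₂ : ℝ) (hc₁ : 0 < c₁) (hc₂ : 0 < c₂)
    (hequiv : ∀ x : Fin n ⊕ Fin m → ℝ,
      c₁ * (x ⬝ᵥ (Matrix.fromBlocks P₁₁ P₂₁ᵀ P₂₁ P₂₂).mulVec x) ≤
          x ⬝ᵥ (Matrix.fromBlocks A₁₁ A₂₁ᵀ A₂₁ A₂₂).mulVec x ∧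
        x ⬝ᵥ (Matrix.fromBlocks A₁₁ A₂₁ᵀ A₂₁ A₂₂).mulVec x ≤
          c₂ * (x ⬝ᵥ (Matrix.fromBlocks P₁₁ P₂₁ᵀ P₂₁ P₂₂).mulVec x)) :
    ∀ xb : Fin m → ℝ,
      c₁ * (xb ⬝ᵥ (P₂₂ - P₂₁ * P₁₁⁻¹ * P₂₁ᵀ).mulVec xb) ≤
          xb ⬝ᵥ (A₂₂ - A₂₁ * A₁₁⁻¹ * A₂₁ᵀ).mulVec xb ∧
        xb ⬝ᵥ (A₂₂ - A₂₁ * A₁₁⁻¹ * A₂₁ᵀ).mulVec xb ≤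
          c₂ * (xb ⬝ᵥ (P₂₂ - P₂₁ * P₁₁⁻¹ * P₂₁ᵀ).mulVec xb) := by
  intro xb
  set uA : Fin n → ℝ := -((A₁₁⁻¹ * A₂₁ᵀ) *ᵥ xb) with huA
  set uP : Fin n → ℝ := -((P₁₁⁻¹ * P₂₁ᵀ) *ᵥ xb) with huP
  have hSA : (Sum.elim uA xb) ⬝ᵥ (fromBlocks A₁₁ A₂₁ᵀ A₂₁ A₂₂) *ᵥ (Sum.elim uA xb) =
      xb ⬝ᵥ (A₂₂ - A₂₁ * A₁₁⁻¹ * A₂₁ᵀ) *ᵥ xb := schur_quad_attained A₁₁ A₂₁ A₂₂ hA₁₁ xb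
  have hSP : (Sum.elim uP xb) ⬝ᵥ (fromBlocks P₁₁ P₂₁ᵀ P₂₁ P₂₂) *ᵥ (Sum.elim uP xb) =
      xb ⬝ᵥ (P₂₂ - P₂₁ * P₁₁⁻¹ * P₂₁ᵀ) *ᵥ xb := schur_quad_attained P₁₁ P₂₁ P₂₂ hP₁₁ xb
  constructor
  · -- c₁ S_P ≤ S_A
    have h1 : xb ⬝ᵥ (P₂₂ - P₂₁ * P₁₁⁻¹ * P₂₁ᵀ) *ᵥ xb ≤
        (Sum.elim uA xb) ⬝ᵥ (fromBlocks P₁₁ P₂₁ᵀ P₂₁ P₂₂) *ᵥ (Sum.elim uA xb) :=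
      schur_quad_min P₁₁ P₂₁ P₂₂ hP₁₁ xb uA
    have h2 := (hequiv (Sum.elim uA xb)).1
    nlinarith [hSA, h1, h2]
  · -- S_A ≤ c₂ S_P
    have h1 : xb ⬝ᵥ (A₂₂ - A₂₁ * A₁₁⁻¹ * A₂₁ᵀ) *ᵥ xb ≤
        (Sum.elim uP xb) ⬝ᵥ (fromBlocks A₁₁ A₂₁ᵀ A₂₁ A₂₂) *ᵥ (Sum.elim uP xb) :=
      schur_quad_min A₁₁ A₂₁ A₂₂ hA₁₁ xb uP
    have h2 := (hequiv (Sum.elim uP xb)).2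
    nlinarith [hSP, h1, h2]
end

section
/- Let B and C be symmetric positive definite real n×n matrices. Then for every q ∈ ℝⁿ, inf{q₁ᵀBq₁ + q₂ᵀCq₂ : q₁, q₂ ∈ ℝⁿ, q₁ + q₂ = q} = qᵀB(B + C)⁻¹Cq. -/
open Matrix

lemma quad_expand {n : ℕ} (M : Matrix (Fin n) (Fin n) ℝ) (hM : Mᵀ = M) (x y : Fin n → ℝ) :
    (x + y) ⬝ᵥ M.mulVec (x + y)
      = x ⬝ᵥ M.mulVec x + 2 * (y ⬝ᵥ M.mulVec x) + y ⬝ᵥ M.mulVec y := by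
  have hsym : x ⬝ᵥ M.mulVec y = y ⬝ᵥ M.mulVec x := by
    rw [dotProduct_mulVec, ← mulVec_transpose, hM, dotProduct_comm]
  simp [mulVec_add, add_dotProduct, dotProduct_add, hsym]
  ring

lemma mulVec_dot {n : ℕ} (M : Matrix (Fin n) (Fin n) ℝ) (x y : Fin n → ℝ) :
    (M.mulVec x) ⬝ᵥ y = x ⬝ᵥ Mᵀ.mulVec y := by
  rw [dotProduct_mulVec, vecMul_transpose, dotProduct_comm]

/-- The infimum over splittings of the sum of two positive definite quadratic forms is
the quadratic form of `B(B + C)⁻¹C` (Section 5.4). -/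
theorem inf_splitting_eq_quadratic_form
    (n : ℕ) (B C : Matrix (Fin n) (Fin n) ℝ)
    (hB : B.PosDef) (hC : C.PosDef) :
    ∀ q : Fin n → ℝ,
      sInf {t : ℝ | ∃ q₁ q₂ : Fin n → ℝ, q₁ + q₂ = q ∧
          t = q₁ ⬝ᵥ B.mulVec q₁ + q₂ ⬝ᵥ C.mulVec q₂} =
        q ⬝ᵥ (B * (B + C)⁻¹ * C).mulVec q := by
  intro q
  have hS : (B + C).PosDef := hB.add hC
  set S := B + C with hSdef
  have hdet : IsUnit S.det := (Matrix.isUnit_iff_isUnit_det S).mp hS.isUnit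
  have h1 : S * S⁻¹ = 1 := Matrix.mul_nonsing_inv _ hdet
  have h2 : S⁻¹ * S = 1 := Matrix.nonsing_inv_mul _ hdet
  have hBt : Bᵀ = B := by
    have := hB.isHermitian; rwa [Matrix.IsHermitian, conjTranspose_eq_transpose_of_trivial] at this
  have hCt : Cᵀ = C := by
    have := hC.isHermitian; rwa [Matrix.IsHermitian, conjTranspose_eq_transpose_of_trivial] at this
  have hSt : Sᵀ = S := by rw [hSdef, transpose_add, hBt, hCt]
  have hSit : (S⁻¹)ᵀ = S⁻¹ := by
    have h := Matrix.transpose_nonsing_inv S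
    rw [h, hSt]
  have hBe : B = S - C := by rw [hSdef]; abel
  have hCB : C + B = S := by rw [hSdef]; abel
  set P := B * S⁻¹ * C with hPdef
  have hP1 : P = C - C * S⁻¹ * C := by
    rw [hPdef]
    conv_lhs => rw [hBe]
    rw [Matrix.sub_mul, Matrix.sub_mul, h1, Matrix.one_mul]
  have hP2 : C * S⁻¹ * B = P := by
    conv_lhs => rw [hBe]
    rw [hP1, Matrix.mul_sub, Matrix.mul_assoc C S⁻¹ S, h2, Matrix.mul_one]
  set a : Fin n → ℝ := (S⁻¹ * C).mulVec q with hadef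
  set b : Fin n → ℝ := (S⁻¹ * B).mulVec q with hbdef
  have hab : a + b = q := by
    rw [hadef, hbdef, ← add_mulVec, ← Matrix.mul_add, hCB, h2, one_mulVec]
  have hBa : B.mulVec a = P.mulVec q := by
    rw [hadef, mulVec_mulVec, ← Matrix.mul_assoc]
  have hCb : C.mulVec b = P.mulVec q := by
    rw [hbdef, mulVec_mulVec, ← Matrix.mul_assoc, hP2]
  have habq : a ⬝ᵥ B.mulVec a + b ⬝ᵥ C.mulVec b = q ⬝ᵥ P.mulVec q := by
    rw [hBa, hCb, hadef, hbdef, mulVec_dot, mulVec_dot, mulVec_mulVec, mulVec_mulVec,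
      ← dotProduct_add, ← add_mulVec, transpose_mul, transpose_mul, hSit, hBt, hCt,
      ← Matrix.add_mul, ← Matrix.add_mul, hCB, h1, Matrix.one_mul]
  have key : ∀ q₁ q₂ : Fin n → ℝ, q₁ + q₂ = q →
      q₁ ⬝ᵥ B.mulVec q₁ + q₂ ⬝ᵥ C.mulVec q₂
        = q ⬝ᵥ P.mulVec q + (q₁ - a) ⬝ᵥ S.mulVec (q₁ - a) := by
    intro q₁ q₂ hq
    set d := q₁ - a with hddef
    have hq₁ : q₁ = a + d := by rw [hddef]; abel
    have hq₂ : q₂ = b + (-d) := by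
      have h : q₂ = q - q₁ := by rw [← hq]; abel
      rw [h, ← hab, hq₁]; abel
    rw [hq₁, hq₂, quad_expand B hBt, quad_expand C hCt, hBa, hCb]
    simp only [mulVec_neg, neg_dotProduct, dotProduct_neg, neg_neg]
    have hdSd : d ⬝ᵥ S.mulVec d = d ⬝ᵥ B.mulVec d + d ⬝ᵥ C.mulVec d := by
      rw [hSdef, add_mulVec, dotProduct_add]
    have habP : a ⬝ᵥ P.mulVec q + b ⬝ᵥ P.mulVec q = q ⬝ᵥ P.mulVec q := by
      rw [← add_dotProduct, hab]
    linarith [habP]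
  have hle : IsLeast {t : ℝ | ∃ q₁ q₂ : Fin n → ℝ, q₁ + q₂ = q ∧
      t = q₁ ⬝ᵥ B.mulVec q₁ + q₂ ⬝ᵥ C.mulVec q₂} (q ⬝ᵥ P.mulVec q) := by
    constructor
    · refine ⟨a, b, hab, ?_⟩
      rw [key a b hab]
      simp
    · rintro t ⟨q₁, q₂, hq, rfl⟩
      rw [key q₁ q₂ hq]
      have hpos := hS.posSemidef.dotProduct_mulVec_nonneg (q₁ - a)
      simp only [star_trivial] at hpos
      linarith
  exact hle.csInf_eq
end

section
/- Let B and C be symmetric positive definite real n×n matrices. Then for every q ∈ ℝⁿ, inf{q₁ᵀBq₁ + q₂ᵀCq₂ : q₁, q₂ ∈ ℝⁿ, q₁ + q₂ = q} = qᵀ(B⁻¹ + C⁻¹)⁻¹q. -/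
open Matrix

/-- The infimum over splittings of the sum of two positive definite quadratic forms is
the quadratic form of the parallel sum `(B⁻¹ + C⁻¹)⁻¹` (Section 5.4). -/
theorem inf_splitting_eq_parallel_sum_form
    (n : ℕ) (B C : Matrix (Fin n) (Fin n) ℝ)
    (hB : B.PosDef) (hC : C.PosDef) :
    ∀ q : Fin n → ℝ,
      sInf {t : ℝ | ∃ q₁ q₂ : Fin n → ℝ, q₁ + q₂ = q ∧
          t = q₁ ⬝ᵥ B.mulVec q₁ + q₂ ⬝ᵥ C.mulVec q₂} =
        q ⬝ᵥ (B⁻¹ + C⁻¹)⁻¹.mulVec q := by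
  intro q
  have hBi : (B⁻¹).PosDef := hB.inv
  have hCi : (C⁻¹).PosDef := hC.inv
  have hS : (B⁻¹ + C⁻¹).PosDef := hBi.add hCi
  set S : Matrix (Fin n) (Fin n) ℝ := B⁻¹ + C⁻¹ with hSdef
  set A : Matrix (Fin n) (Fin n) ℝ := S⁻¹ with hAdef
  have hBB : B * B⁻¹ = 1 := mul_nonsing_inv B hB.det_pos.ne'.isUnit
  have hCC : C * C⁻¹ = 1 := mul_nonsing_inv C hC.det_pos.ne'.isUnit
  have hSA : S * A = 1 := mul_nonsing_inv S hS.det_pos.ne'.isUnit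
  set w : Fin n → ℝ := A.mulVec q with hwdef
  set p₁ : Fin n → ℝ := B⁻¹.mulVec w with hp1
  set p₂ : Fin n → ℝ := C⁻¹.mulVec w with hp2
  have hBp₁ : B.mulVec p₁ = w := by
    rw [hp1, Matrix.mulVec_mulVec, hBB, Matrix.one_mulVec]
  have hCp₂ : C.mulVec p₂ = w := by
    rw [hp2, Matrix.mulVec_mulVec, hCC, Matrix.one_mulVec]
  have hsum : p₁ + p₂ = q := by
    have : S.mulVec w = q := by
      rw [hwdef, Matrix.mulVec_mulVec, hSA, Matrix.one_mulVec]
    rw [hp1, hp2, ← Matrix.add_mulVec, ← hSdef, this]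
  have hval : p₁ ⬝ᵥ B.mulVec p₁ + p₂ ⬝ᵥ C.mulVec p₂ = q ⬝ᵥ A.mulVec q := by
    rw [hBp₁, hCp₂, ← add_dotProduct, hsum, hwdef]
  -- symmetry helpers
  have symmB : ∀ x y : Fin n → ℝ, x ⬝ᵥ B.mulVec y = y ⬝ᵥ B.mulVec x := fun x y => by
    rw [dotProduct_mulVec, ← Matrix.mulVec_transpose]
    have : Bᵀ = B := by
      have := hB.1; rwa [Matrix.IsHermitian, conjTranspose_eq_transpose_of_trivial] at this
    rw [this, dotProduct_comm]
  have symmC : ∀ x y : Fin n → ℝ, x ⬝ᵥ C.mulVec y = y ⬝ᵥ C.mulVec x := fun x y => by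
    rw [dotProduct_mulVec, ← Matrix.mulVec_transpose]
    have : Cᵀ = C := by
      have := hC.1; rwa [Matrix.IsHermitian, conjTranspose_eq_transpose_of_trivial] at this
    rw [this, dotProduct_comm]
  have hnnB : ∀ x : Fin n → ℝ, 0 ≤ x ⬝ᵥ B.mulVec x := fun x => by
    simpa using hB.posSemidef.dotProduct_mulVec_nonneg x
  have hnnC : ∀ x : Fin n → ℝ, 0 ≤ x ⬝ᵥ C.mulVec x := fun x => by
    simpa using hC.posSemidef.dotProduct_mulVec_nonneg x
  -- lower bound
  have hlb : ∀ t ∈ {t : ℝ | ∃ q₁ q₂ : Fin n → ℝ, q₁ + q₂ = q ∧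
      t = q₁ ⬝ᵥ B.mulVec q₁ + q₂ ⬝ᵥ C.mulVec q₂}, q ⬝ᵥ A.mulVec q ≤ t := by
    rintro t ⟨q₁, q₂, hq, rfl⟩
    set r₁ : Fin n → ℝ := q₁ - p₁ with hr1
    set r₂ : Fin n → ℝ := q₂ - p₂ with hr2
    have hq₁ : q₁ = p₁ + r₁ := by rw [hr1]; abel
    have hq₂ : q₂ = p₂ + r₂ := by rw [hr2]; abel
    have hr : r₁ + r₂ = 0 := by
      rw [hr1, hr2]
      have : q₁ + q₂ - (p₁ + p₂) = 0 := by rw [hq, hsum, sub_self]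
      rw [← this]; abel
    have expandB : q₁ ⬝ᵥ B.mulVec q₁
        = p₁ ⬝ᵥ B.mulVec p₁ + 2 * (r₁ ⬝ᵥ w) + r₁ ⬝ᵥ B.mulVec r₁ := by
      rw [hq₁, Matrix.mulVec_add, dotProduct_add, add_dotProduct, add_dotProduct,
        symmB p₁ r₁, ← hBp₁]
      ring
    have expandC : q₂ ⬝ᵥ C.mulVec q₂
        = p₂ ⬝ᵥ C.mulVec p₂ + 2 * (r₂ ⬝ᵥ w) + r₂ ⬝ᵥ C.mulVec r₂ := by
      rw [hq₂, Matrix.mulVec_add, dotProduct_add, add_dotProduct, add_dotProduct,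
        symmC p₂ r₂, ← hCp₂]
      ring
    have hcross : r₁ ⬝ᵥ w + r₂ ⬝ᵥ w = 0 := by
      rw [← add_dotProduct, hr, zero_dotProduct]
    have : q₁ ⬝ᵥ B.mulVec q₁ + q₂ ⬝ᵥ C.mulVec q₂
        = q ⬝ᵥ A.mulVec q + (r₁ ⬝ᵥ B.mulVec r₁ + r₂ ⬝ᵥ C.mulVec r₂) := by
      rw [expandB, expandC, ← hval]; linarith
    rw [this]
    have := add_nonneg (hnnB r₁) (hnnC r₂)
    linarith
  refine le_antisymm ?_ ?_
  · exact csInf_le ⟨_, hlb⟩ ⟨p₁, p₂, hsum, hval.symm⟩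
  · exact le_csInf ⟨_, ⟨p₁, p₂, hsum, hval.symm⟩⟩ hlb
end
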